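/- Suppose λ_1 ≥ ⋯ ≥ λ_{N'} > 0 are such that λ_i = σ² for all i > p and λ_p > σ², where 1 ≤ p < N'. Then the MDL data term D(ζ) = −(N'−ζ)·M'·log(GM(ζ)/AM(ζ)) satisfies D(p) = 0 and D(ζ) > 0 for every ζ < p. -/

import Mathlib

/-- With λ_1 ≥ ⋯ ≥ λ_{N'} > 0, λ_i = σ² for i > p and λ_p > σ², the MDL data
term D(ζ) = −(N'−ζ)·M'·log(GM(ζ)/AM(ζ)) satisfies D(p) = 0 and D(ζ) > 0 for ζ < p. -/
theorem stmt15 (N' p : ℕ) (hp1 : 1 ≤ p) (hp : p < N') (M' σ2 : ℝ)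
    (hM : 0 < M') (hσ : 0 < σ2) (l : ℕ → ℝ)
    (hpos : ∀ i ∈ Finset.Icc 1 N', 0 < l i)
    (hmono : ∀ i j : ℕ, 1 ≤ i → i ≤ j → j ≤ N' → l j ≤ l i)
    (hnoise : ∀ i, p < i → i ≤ N' → l i = σ2) (hsig : σ2 < l p) :
    (fun ζ : ℕ => -(((N' : ℝ) - ζ) * M' *
        Real.log ((∏ i ∈ Finset.Ioc ζ N', l i) ^ (((N' : ℝ) - ζ)⁻¹) /
          ((∑ i ∈ Finset.Ioc ζ N', l i) / ((N' : ℝ) - ζ))))) p = 0 ∧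
    ∀ ζ < p, 0 < (fun ζ : ℕ => -(((N' : ℝ) - ζ) * M' *
        Real.log ((∏ i ∈ Finset.Ioc ζ N', l i) ^ (((N' : ℝ) - ζ)⁻¹) /
          ((∑ i ∈ Finset.Ioc ζ N', l i) / ((N' : ℝ) - ζ))))) ζ := by
  constructor
  · -- ζ = p : all entries equal σ2
    simp only
    have hcard : (Finset.Ioc p N').card = N' - p := Nat.card_Ioc p N'
    have hcast : ((N' : ℝ) - p) = ((N' - p : ℕ) : ℝ) := by
      rw [Nat.cast_sub hp.le]
    have hne : (0:ℝ) < ((N' - p : ℕ) : ℝ) := by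
      have : 0 < N' - p := Nat.sub_pos_of_lt hp
      exact_mod_cast this
    have hprod : (∏ i ∈ Finset.Ioc p N', l i) = σ2 ^ (N' - p) := by
      rw [Finset.prod_congr rfl (fun i hi => ?_), Finset.prod_const, hcard]
      exact hnoise i (Finset.mem_Ioc.mp hi).1 (Finset.mem_Ioc.mp hi).2
    have hsum : (∑ i ∈ Finset.Ioc p N', l i) = ((N' - p : ℕ) : ℝ) * σ2 := by
      rw [Finset.sum_congr rfl (fun i hi => ?_), Finset.sum_const, hcard,
        nsmul_eq_mul]
      exact hnoise i (Finset.mem_Ioc.mp hi).1 (Finset.mem_Ioc.mp hi).2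
    rw [hprod, hsum, hcast]
    have h1 : (σ2 ^ (N' - p)) ^ (((N' - p : ℕ) : ℝ))⁻¹ = σ2 := by
      rw [← Real.rpow_natCast σ2 (N' - p), ← Real.rpow_mul hσ.le,
        mul_inv_cancel₀ hne.ne', Real.rpow_one]
    have h2 : ((N' - p : ℕ) : ℝ) * σ2 / ((N' - p : ℕ) : ℝ) = σ2 := by
      field_simp
    rw [h1, h2, div_self hσ.ne', Real.log_one, mul_zero, neg_zero]
  · intro ζ hζ
    simp only
    set t := Finset.Ioc ζ N' with ht
    have hζN : ζ < N' := hζ.trans hp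
    have hcard : t.card = N' - ζ := Nat.card_Ioc ζ N'
    have hcast : ((N' : ℝ) - ζ) = ((N' - ζ : ℕ) : ℝ) := by
      rw [Nat.cast_sub hζN.le]
    have hn : (0:ℝ) < ((N' - ζ : ℕ) : ℝ) := by
      have : 0 < N' - ζ := Nat.sub_pos_of_lt hζN
      exact_mod_cast this
    have hposn : (0:ℝ) < (N' : ℝ) - ζ := by rw [hcast]; exact hn
    have hmem : ∀ i ∈ t, 0 < l i := by
      intro i hi
      obtain ⟨h1, h2⟩ := Finset.mem_Ioc.mp hi
      exact hpos i (Finset.mem_Icc.mpr ⟨Nat.one_le_of_lt (Nat.lt_of_le_of_lt (Nat.zero_le ζ) h1), h2⟩)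
    have hpt : p ∈ t := Finset.mem_Ioc.mpr ⟨hζ, hp.le⟩
    have hNt : N' ∈ t := Finset.mem_Ioc.mpr ⟨hζN, le_rfl⟩
    have hlN : l N' = σ2 := hnoise N' hp le_rfl
    -- strict Jensen with weights 1/n
    have hw : ∀ i ∈ t, (0:ℝ) < (((N' - ζ : ℕ) : ℝ))⁻¹ := fun i _ => inv_pos.mpr hn
    have hw1 : ∑ _i ∈ t, (((N' - ζ : ℕ) : ℝ))⁻¹ = 1 := by
      rw [Finset.sum_const, hcard, nsmul_eq_mul, mul_inv_cancel₀ hn.ne']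
    have hjensen := strictConcaveOn_log_Ioi.lt_map_sum
      (w := fun _ => (((N' - ζ : ℕ) : ℝ))⁻¹) (p := l) (t := t) hw hw1
      (fun i hi => hmem i hi) ⟨p, hpt, N', hNt, by rw [hlN]; exact hsig.ne'⟩
    -- translate
    have hProdpos : 0 < ∏ i ∈ t, l i := Finset.prod_pos hmem
    have hSumpos : 0 < ∑ i ∈ t, l i := Finset.sum_pos hmem ⟨p, hpt⟩
    have hLHS : ∑ i ∈ t, (((N' - ζ : ℕ) : ℝ))⁻¹ • Real.log (l i)
        = Real.log ((∏ i ∈ t, l i) ^ ((((N' - ζ : ℕ) : ℝ))⁻¹)) := by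
      rw [Real.log_rpow hProdpos, Real.log_prod (fun i hi => (hmem i hi).ne'),
        Finset.mul_sum]
      simp [smul_eq_mul, mul_comm]
    have hRHS : (∑ i ∈ t, (((N' - ζ : ℕ) : ℝ))⁻¹ • l i)
        = (∑ i ∈ t, l i) / ((N' - ζ : ℕ) : ℝ) := by
      rw [Finset.sum_div]
      exact Finset.sum_congr rfl fun i _ => by rw [smul_eq_mul, div_eq_inv_mul]
    rw [hLHS, hRHS] at hjensen
    have hGMpos : 0 < (∏ i ∈ t, l i) ^ ((((N' - ζ : ℕ) : ℝ))⁻¹) :=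
      Real.rpow_pos_of_pos hProdpos _
    have hlt : (∏ i ∈ t, l i) ^ ((((N' - ζ : ℕ) : ℝ))⁻¹)
        < (∑ i ∈ t, l i) / ((N' - ζ : ℕ) : ℝ) :=
      (Real.log_lt_log_iff hGMpos (by positivity)).mp hjensen
    have hlog : Real.log ((∏ i ∈ t, l i) ^ ((((N' - ζ : ℕ) : ℝ))⁻¹)
        / ((∑ i ∈ t, l i) / ((N' - ζ : ℕ) : ℝ))) < 0 := by
      apply Real.log_neg
      · positivity
      · rw [div_lt_one (by positivity)]; exact hlt
    rw [hcast]
    nlinarith [mul_pos hn hM, mul_pos (mul_pos hn hM) (neg_pos.mpr hlog)]
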